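/- Let n be odd and let S be a finite set of pairwise non-attacking positions on the n×n board containing the central position ((n−1)/2, (n−1)/2) and closed under the half-turn rotation ρ(r,c) = (n−1−r, n−1−c). If there exists at least one board position not in S and not attacked by any element of S, then there exist two distinct board positions p and q, each not in S and not attacked by any element of S, not attacking each other, such that S ∪ {p, q} is pairwise non-attacking, contains the central position, and is closed under ρ. (Hence the first player, following the mirroring strategy, always has a reply to any legal move of the second player.) -/
import Mathlib


/-- A position `(r, c)` lies on the `n × n` board iff `0 ≤ r, c ≤ n - 1`. -/
def onBoard (n : ℕ) (p : ℕ × ℕ) : Prop := p.1 ≤ n - 1 ∧ p.2 ≤ n - 1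

/-- Two distinct positions attack each other iff they share a row, a column,
a falling diagonal, or a rising diagonal. -/
def attacks (p q : ℕ × ℕ) : Prop :=
  p ≠ q ∧ (p.1 = q.1 ∨ p.2 = q.2 ∨ p.1 + p.2 = q.1 + q.2 ∨ p.1 + q.2 = q.1 + p.2)

/-- The half-turn rotation `ρ(r, c) = (n - 1 - r, n - 1 - c)` of the `n × n` board. -/
def rot (n : ℕ) (p : ℕ × ℕ) : ℕ × ℕ := (n - 1 - p.1, n - 1 - p.2)

/-- The central position of the `n × n` board for odd `n`. -/
def center (n : ℕ) : ℕ × ℕ := ((n - 1) / 2, (n - 1) / 2)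

lemma attacks_symm {p q : ℕ × ℕ} (h : attacks p q) : attacks q p := by
  obtain ⟨h1, h2⟩ := h
  exact ⟨Ne.symm h1, by omega⟩

lemma rot_rot {n : ℕ} {p : ℕ × ℕ} (hp : onBoard n p) : rot n (rot n p) = p := by
  obtain ⟨h1, h2⟩ := hp
  unfold rot
  rw [Prod.ext_iff]
  simp only []
  omega

lemma rot_attacks {n : ℕ} {p q : ℕ × ℕ} (hp : onBoard n p) (hq : onBoard n q)
    (h : attacks p q) : attacks (rot n p) (rot n q) := by
  obtain ⟨hp1, hp2⟩ := hp
  obtain ⟨hq1, hq2⟩ := hq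
  obtain ⟨h1, h2⟩ := h
  unfold rot
  refine ⟨fun he => h1 ?_, by simp only []; omega⟩
  rw [Prod.ext_iff] at he ⊢
  simp only [] at he
  omega

/-- If S is a pairwise non-attacking, ρ-closed set of board positions containing
the center and some board position outside S is unattacked by S, then there are
two distinct such positions p and q, not attacking each other, with S ∪ {p, q}
pairwise non-attacking, containing the center, and closed under ρ. -/
theorem mirroring_reply_exists (n : ℕ) (hn : Odd n) (S : Finset (ℕ × ℕ))
    (hb : ∀ p ∈ S, onBoard n p)
    (hna : ∀ p ∈ S, ∀ q ∈ S, p ≠ q → ¬ attacks p q)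
    (hcen : center n ∈ S)
    (hcl : ∀ p ∈ S, rot n p ∈ S)
    (hex : ∃ p, onBoard n p ∧ p ∉ S ∧ ∀ s ∈ S, ¬ attacks s p) :
    ∃ p q : ℕ × ℕ, p ≠ q ∧
      onBoard n p ∧ onBoard n q ∧
      p ∉ S ∧ q ∉ S ∧
      (∀ s ∈ S, ¬ attacks s p) ∧ (∀ s ∈ S, ¬ attacks s q) ∧
      ¬ attacks p q ∧
      (∀ a ∈ insert p (insert q S), ∀ b ∈ insert p (insert q S),
        a ≠ b → ¬ attacks a b) ∧
      center n ∈ insert p (insert q S) ∧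
      (∀ a ∈ insert p (insert q S), rot n a ∈ insert p (insert q S)) := by
  obtain ⟨p, hpb, hpS, hpun⟩ := hex
  obtain ⟨k, hk⟩ := hn
  set q := rot n p with hq
  -- p is not the center
  have hpc : p ≠ center n := fun h => hpS (h ▸ hcen)
  -- the center does not attack p, so p is off the central lines
  have hcp := hpun _ hcen
  have hcne : center n ≠ p := Ne.symm hpc
  have hlines : ¬((n-1)/2 = p.1 ∨ (n-1)/2 = p.2 ∨
      (n-1)/2 + (n-1)/2 = p.1 + p.2 ∨ (n-1)/2 + p.2 = p.1 + (n-1)/2) := by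
    intro h
    exact hcp ⟨hcne, h⟩
  have hp1 : p.1 ≤ n - 1 := hpb.1
  have hp2 : p.2 ≤ n - 1 := hpb.2
  have hqdef : q = (n - 1 - p.1, n - 1 - p.2) := rfl
  have hqb : onBoard n q := ⟨Nat.sub_le _ _, Nat.sub_le _ _⟩
  have hpq : p ≠ q := by
    rw [hqdef]
    intro he
    rw [Prod.ext_iff] at he
    simp only [] at he
    unfold center at hlines
    omega
  have hqS : q ∉ S := fun h => hpS (by have := hcl q h; rwa [hq, rot_rot hpb] at this)
  have hqun : ∀ s ∈ S, ¬ attacks s q := by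
    intro s hs hat
    have hsb := hb s hs
    have := rot_attacks hsb hqb hat
    rw [hq, rot_rot hpb] at this
    exact hpun _ (hcl s hs) this
  have hnpq : ¬ attacks p q := by
    rintro ⟨h1, h2⟩
    rw [hqdef] at h2
    unfold center at hlines
    simp only [] at h2
    omega
  refine ⟨p, q, hpq, hpb, hqb, hpS, hqS, hpun, hqun, hnpq, ?_, ?_, ?_⟩
  · intro a ha b hb' hab
    simp only [Finset.mem_insert] at ha hb'
    rcases ha with rfl | rfl | ha <;> rcases hb' with rfl | rfl | hb'
    · exact absurd rfl hab
    · exact hnpq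
    · exact fun h => hpun b hb' (attacks_symm h)
    · exact fun h => hnpq (attacks_symm h)
    · exact absurd rfl hab
    · exact fun h => hqun b hb' (attacks_symm h)
    · exact hpun a ha
    · exact hqun a ha
    · exact hna a ha b hb' hab
  · exact Finset.mem_insert_of_mem (Finset.mem_insert_of_mem hcen)
  · intro a ha
    simp only [Finset.mem_insert] at ha ⊢
    rcases ha with rfl | rfl | ha
    · right; left; rfl
    · left; rw [hq, rot_rot hpb]
    · right; right; exact hcl a ha
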